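/- Let α > 0, 0 < δ < 1, m₀ ≥ 2, and f : (0,1] → [0,∞) nondecreasing. Then ∑_{j=m₀}^∞ δ^{jα} ∫_{δ^j}^{δ^{m₀-2}} f(r)/r^{1+α} dr ≤ (1/(α(1-δ)δ^α)) ( ∫_0^{δ^{m₀}} f(r)/r dr + δ^{m₀ α} ∫_{δ^{m₀}}^{δ^{m₀-2}} f(r)/r^{1+α} dr ), provided ∫_0^1 f(r)/r dr < ∞. -/

import Mathlib

open Set

theorem tail_sum_integral_bound (f : ℝ → ℝ) (δ α : ℝ) (hδ0 : 0 < δ) (hδ1 : δ < 1)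
    (hα : 0 < α) (m₀ : ℕ) (hm₀ : 2 ≤ m₀)
    (hnonneg : ∀ r ∈ Ioc (0 : ℝ) 1, 0 ≤ f r)
    (hmono : ∀ r ∈ Ioc (0 : ℝ) 1, ∀ s ∈ Ioc (0 : ℝ) 1, r ≤ s → f r ≤ f s)
    (hdini : MeasureTheory.IntegrableOn (fun r => f r / r) (Ioc (0 : ℝ) 1)) :
    (∑' k : ℕ, δ ^ ((m₀ + k : ℕ) * α) *
        ∫ r in Ioc (δ ^ (m₀ + k)) (δ ^ (m₀ - 2)), f r / r ^ (1 + α)) ≤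
      (1 / (α * (1 - δ) * δ ^ α)) *
        ((∫ r in Ioc (0 : ℝ) (δ ^ m₀), f r / r) +
          δ ^ (m₀ * α) * ∫ r in Ioc (δ ^ m₀) (δ ^ (m₀ - 2)), f r / r ^ (1 + α)) := by
  have hδle : (0:ℝ) ≤ δ := hδ0.le
  have hq0 : 0 < δ ^ α := Real.rpow_pos_of_pos hδ0 α
  have hq1 : δ ^ α < 1 := Real.rpow_lt_one hδle hδ1 hα
  set q : ℝ := δ ^ α with hq_def
  have h1q : 0 < 1 - q := by linarith
  have hpow_pos : ∀ n : ℕ, (0:ℝ) < δ ^ n := fun n => pow_pos hδ0 n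
  have hpow_le_one : ∀ n : ℕ, (δ:ℝ) ^ n ≤ 1 := fun n => pow_le_one₀ hδle hδ1.le
  have hpow_anti : ∀ {m n : ℕ}, m ≤ n → (δ:ℝ) ^ n ≤ δ ^ m :=
    fun h => pow_le_pow_of_le_one hδle hδ1.le h
  have hrpow_eq : ∀ n : ℕ, δ ^ ((n : ℝ) * α) = q ^ n := by
    intro n
    rw [hq_def, mul_comm, Real.rpow_mul hδle, Real.rpow_natCast]
  have hpow_rpow : ∀ n : ℕ, ((δ:ℝ) ^ n) ^ α = q ^ n := by
    intro n
    rw [← Real.rpow_natCast δ n, ← Real.rpow_mul hδle]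
    exact hrpow_eq n
  -- key elementary inequality
  have hkey : α * (1 - δ) * q ≤ 1 - q := by
    have hlog : Real.log δ ≤ δ - 1 := Real.log_le_sub_one_of_pos hδ0
    have hneg : δ ^ (-α) = Real.exp (Real.log δ * (-α)) := Real.rpow_def_of_pos hδ0 (-α)
    have hexp : Real.log δ * (-α) + 1 ≤ Real.exp (Real.log δ * (-α)) := Real.add_one_le_exp _
    have h1 : 1 + α * (1 - δ) ≤ δ ^ (-α) := by
      rw [hneg]; nlinarith
    have h3 : δ ^ (-α) * q = 1 := by
      rw [hq_def, ← Real.rpow_add hδ0]; simp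
    nlinarith [mul_le_mul_of_nonneg_right h1 hq0.le]
  have hden_pos : 0 < α * (1 - δ) * q := by
    have h1δ : 0 < 1 - δ := by linarith
    positivity
  have hfrac : 1 / (1 - q) ≤ 1 / (α * (1 - δ) * q) :=
    one_div_le_one_div_of_le hden_pos hkey
  -- integrability of f r / r on subintervals
  have hg_int : ∀ {a b : ℝ}, 0 ≤ a → b ≤ 1 →
      MeasureTheory.IntegrableOn (fun r => f r / r) (Ioc a b) :=
    fun ha hb => hdini.mono_set (Ioc_subset_Ioc ha hb)
  -- pointwise identity
  have hF_eq : ∀ r : ℝ, 0 < r → f r / r ^ (1 + α) = (f r / r) * (r ^ α)⁻¹ := by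
    intro r hr
    rw [Real.rpow_add hr, Real.rpow_one, div_mul_eq_div_div, div_eq_mul_inv]
  -- integrability of f r / r^(1+α) on subintervals away from 0
  have hF_int : ∀ {a b : ℝ}, 0 < a → b ≤ 1 →
      MeasureTheory.IntegrableOn (fun r => f r / r ^ (1 + α)) (Ioc a b) := by
    intro a b ha hb
    have hsub : Ioc a b ⊆ Ioc (0:ℝ) 1 := Ioc_subset_Ioc ha.le hb
    have hgi := hg_int ha.le hb
    have hbd : ∀ r ∈ Ioc a b, (r ^ α)⁻¹ ≤ (a ^ α)⁻¹ := by
      intro r hr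
      exact inv_anti₀ (Real.rpow_pos_of_pos ha α)
        (Real.rpow_le_rpow ha.le hr.1.le hα.le)
    have hmeas : MeasureTheory.AEStronglyMeasurable (fun r => f r / r ^ (1 + α))
        (MeasureTheory.volume.restrict (Ioc a b)) := by
      have h2 : MeasureTheory.AEStronglyMeasurable (fun r : ℝ => (r ^ α)⁻¹)
          (MeasureTheory.volume.restrict (Ioc a b)) := by
        apply ContinuousOn.aestronglyMeasurable _ measurableSet_Ioc
        intro r hr
        exact (((Real.continuousAt_rpow_const r α
          (Or.inl (ne_of_gt (ha.trans hr.1)))).inv₀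
          (ne_of_gt (Real.rpow_pos_of_pos (ha.trans hr.1) α)))).continuousWithinAt
      apply (hgi.aestronglyMeasurable.mul h2).congr
      filter_upwards [MeasureTheory.ae_restrict_mem measurableSet_Ioc] with r hr
      exact (hF_eq r (ha.trans hr.1)).symm
    apply MeasureTheory.Integrable.mono' (hgi.const_mul ((a ^ α)⁻¹)) hmeas
    filter_upwards [MeasureTheory.ae_restrict_mem measurableSet_Ioc] with r hr
    have hr0 : 0 < r := ha.trans hr.1
    have hfr : 0 ≤ f r := hnonneg r (hsub hr)
    have hF0 : 0 ≤ f r / r ^ (1 + α) := div_nonneg hfr (Real.rpow_nonneg hr0.le _)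
    rw [Real.norm_of_nonneg hF0, hF_eq r hr0]
    calc (f r / r) * (r ^ α)⁻¹ ≤ (f r / r) * (a ^ α)⁻¹ :=
          mul_le_mul_of_nonneg_left (hbd r hr) (div_nonneg hfr hr0.le)
      _ = (a ^ α)⁻¹ * (f r / r) := mul_comm _ _
  -- nonnegativity of integrals
  have hF_nonneg : ∀ {a b : ℝ}, 0 ≤ a → b ≤ 1 →
      0 ≤ ∫ r in Ioc a b, f r / r ^ (1 + α) := by
    intro a b ha hb
    apply MeasureTheory.setIntegral_nonneg measurableSet_Ioc
    intro r hr
    exact div_nonneg (hnonneg r (Ioc_subset_Ioc ha hb hr))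
      (Real.rpow_nonneg (lt_of_le_of_lt ha hr.1).le _)
  have hg_nonneg : ∀ {a b : ℝ}, 0 ≤ a → b ≤ 1 →
      0 ≤ ∫ r in Ioc a b, f r / r := by
    intro a b ha hb
    apply MeasureTheory.setIntegral_nonneg measurableSet_Ioc
    intro r hr
    exact div_nonneg (hnonneg r (Ioc_subset_Ioc ha hb hr)) (lt_of_le_of_lt ha hr.1).le
  -- splitting lemmas
  have hsplitF : ∀ {a b c : ℝ}, 0 < a → a ≤ b → b ≤ c → c ≤ 1 →
      (∫ r in Ioc a c, f r / r ^ (1 + α)) =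
        (∫ r in Ioc a b, f r / r ^ (1 + α)) + ∫ r in Ioc b c, f r / r ^ (1 + α) := by
    intro a b c ha hab hbc hc
    rw [← Set.Ioc_union_Ioc_eq_Ioc hab hbc]
    exact MeasureTheory.setIntegral_union (Set.Ioc_disjoint_Ioc_of_le le_rfl) measurableSet_Ioc
      (hF_int ha (hbc.trans hc)) (hF_int (ha.trans_le hab) hc)
  have hsplitG : ∀ {a b c : ℝ}, 0 < a → a ≤ b → b ≤ c → c ≤ 1 →
      (∫ r in Ioc a c, f r / r) =
        (∫ r in Ioc a b, f r / r) + ∫ r in Ioc b c, f r / r := by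
    intro a b c ha hab hbc hc
    rw [← Set.Ioc_union_Ioc_eq_Ioc hab hbc]
    exact MeasureTheory.setIntegral_union (Set.Ioc_disjoint_Ioc_of_le le_rfl) measurableSet_Ioc
      (hg_int ha.le (hbc.trans hc)) (hg_int (ha.trans_le hab).le hc)
  -- decomposition of the tail integrals
  have hdecomp : ∀ k : ℕ,
      (∫ r in Ioc (δ ^ (m₀ + k)) (δ ^ (m₀ - 2)), f r / r ^ (1 + α)) =
        (∑ i ∈ Finset.range k, ∫ r in Ioc (δ ^ (m₀ + i + 1)) (δ ^ (m₀ + i)), f r / r ^ (1 + α)) +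
        ∫ r in Ioc (δ ^ m₀) (δ ^ (m₀ - 2)), f r / r ^ (1 + α) := by
    intro k
    induction k with
    | zero => simp
    | succ k ih =>
      have e : m₀ + (k + 1) = m₀ + k + 1 := by omega
      rw [e, hsplitF (hpow_pos (m₀ + k + 1)) (hpow_anti (by omega : m₀ + k ≤ m₀ + k + 1))
        (hpow_anti (by omega : m₀ - 2 ≤ m₀ + k)) (hpow_le_one (m₀ - 2)), ih,
        Finset.sum_range_succ]
      ring
  -- sum of the small g-integrals
  have hgsum : ∀ n : ℕ,
      (∑ i ∈ Finset.range n, ∫ r in Ioc (δ ^ (m₀ + i + 1)) (δ ^ (m₀ + i)), f r / r) =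
        ∫ r in Ioc (δ ^ (m₀ + n)) (δ ^ m₀), f r / r := by
    intro n
    induction n with
    | zero => simp
    | succ n ih =>
      have e : m₀ + (n + 1) = m₀ + n + 1 := by omega
      rw [e, hsplitG (hpow_pos (m₀ + n + 1)) (hpow_anti (by omega : m₀ + n ≤ m₀ + n + 1))
        (hpow_anti (by omega : m₀ ≤ m₀ + n)) (hpow_le_one m₀), Finset.sum_range_succ, ih]
      ring
  -- bound on each dyadic piece
  have hJbound : ∀ j : ℕ,
      (∫ r in Ioc (δ ^ (j + 1)) (δ ^ j), f r / r ^ (1 + α)) ≤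
        (q ^ (j + 1))⁻¹ * ∫ r in Ioc (δ ^ (j + 1)) (δ ^ j), f r / r := by
    intro j
    rw [← MeasureTheory.integral_const_mul]
    apply MeasureTheory.setIntegral_mono_on (hF_int (hpow_pos (j + 1)) (hpow_le_one j))
      ((hg_int (hpow_pos (j + 1)).le (hpow_le_one j)).const_mul _) measurableSet_Ioc
    intro r hr
    have hr0 : 0 < r := (hpow_pos (j + 1)).trans hr.1
    have hfr : 0 ≤ f r := hnonneg r ⟨hr0, hr.2.trans (hpow_le_one j)⟩
    rw [hF_eq r hr0, ← hpow_rpow (j + 1), mul_comm ((((δ:ℝ) ^ (j+1)) ^ α)⁻¹)]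
    apply mul_le_mul_of_nonneg_left _ (div_nonneg hfr hr0.le)
    exact inv_anti₀ (Real.rpow_pos_of_pos (hpow_pos (j + 1)) α)
      (Real.rpow_le_rpow (hpow_pos (j + 1)).le hr.1.le hα.le)
  -- geometric sum bound
  have hgeom : ∀ m : ℕ, (∑ j ∈ Finset.range m, q ^ j) ≤ 1 / (1 - q) := by
    intro m
    rw [le_div_iff₀ h1q]
    nlinarith [geom_sum_mul q m, pow_nonneg hq0.le m]
  -- nonnegativity of terms
  have hterm_nonneg : ∀ k : ℕ, 0 ≤ δ ^ ((m₀ + k : ℕ) * α) *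
      ∫ r in Ioc (δ ^ (m₀ + k)) (δ ^ (m₀ - 2)), f r / r ^ (1 + α) :=
    fun k => mul_nonneg (Real.rpow_nonneg hδle _)
      (hF_nonneg (hpow_pos (m₀ + k)).le (hpow_le_one (m₀ - 2)))
  -- notation for the two main quantities
  have hA_nonneg : 0 ≤ ∫ r in Ioc (0:ℝ) (δ ^ m₀), f r / r := hg_nonneg le_rfl (hpow_le_one m₀)
  have hIm_nonneg : 0 ≤ ∫ r in Ioc (δ ^ m₀) (δ ^ (m₀ - 2)), f r / r ^ (1 + α) :=
    hF_nonneg (hpow_pos m₀).le (hpow_le_one (m₀ - 2))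
  -- partial sums bound
  have hpartial : ∀ n : ℕ,
      (∑ k ∈ Finset.range n, δ ^ ((m₀ + k : ℕ) * α) *
        ∫ r in Ioc (δ ^ (m₀ + k)) (δ ^ (m₀ - 2)), f r / r ^ (1 + α)) ≤
      (1 / (1 - q)) * ((∫ r in Ioc (0:ℝ) (δ ^ m₀), f r / r) +
        q ^ m₀ * ∫ r in Ioc (δ ^ m₀) (δ ^ (m₀ - 2)), f r / r ^ (1 + α)) := by
    intro n
    have step1 : (∑ k ∈ Finset.range n, δ ^ ((m₀ + k : ℕ) * α) *
        ∫ r in Ioc (δ ^ (m₀ + k)) (δ ^ (m₀ - 2)), f r / r ^ (1 + α)) ≤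
        (∑ k ∈ Finset.range n, ((∑ i ∈ Finset.range k,
            q ^ (k - i - 1) * ∫ r in Ioc (δ ^ (m₀ + i + 1)) (δ ^ (m₀ + i)), f r / r) +
          q ^ (m₀ + k) * ∫ r in Ioc (δ ^ m₀) (δ ^ (m₀ - 2)), f r / r ^ (1 + α))) := by
      apply Finset.sum_le_sum
      intro k _
      rw [hrpow_eq (m₀ + k), hdecomp k, mul_add]
      refine add_le_add ?_ le_rfl
      rw [Finset.mul_sum]
      apply Finset.sum_le_sum
      intro i hi
      have hik : i < k := Finset.mem_range.mp hi
      have hqq : q ^ (m₀ + k) * (q ^ (m₀ + i + 1))⁻¹ = q ^ (k - i - 1) := by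
        rw [← pow_sub₀ q hq0.ne' (by omega : m₀ + i + 1 ≤ m₀ + k)]
        congr 1
        omega
      calc q ^ (m₀ + k) * ∫ r in Ioc (δ ^ (m₀ + i + 1)) (δ ^ (m₀ + i)), f r / r ^ (1 + α)
          ≤ q ^ (m₀ + k) * ((q ^ (m₀ + i + 1))⁻¹ *
              ∫ r in Ioc (δ ^ (m₀ + i + 1)) (δ ^ (m₀ + i)), f r / r) :=
            mul_le_mul_of_nonneg_left (hJbound (m₀ + i)) (pow_nonneg hq0.le _)
        _ = q ^ (k - i - 1) * ∫ r in Ioc (δ ^ (m₀ + i + 1)) (δ ^ (m₀ + i)), f r / r := by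
            rw [← mul_assoc, hqq]
    -- swap the double sum
    have hswap : (∑ k ∈ Finset.range n, ∑ i ∈ Finset.range k,
        q ^ (k - i - 1) * ∫ r in Ioc (δ ^ (m₀ + i + 1)) (δ ^ (m₀ + i)), f r / r) =
        ∑ i ∈ Finset.range n, ∑ k ∈ Finset.Ico (i + 1) n,
          q ^ (k - i - 1) * ∫ r in Ioc (δ ^ (m₀ + i + 1)) (δ ^ (m₀ + i)), f r / r := by
      simp only [Finset.range_eq_Ico]
      exact (Finset.sum_Ico_Ico_comm' 0 n fun i k =>
        q ^ (k - i - 1) * ∫ r in Ioc (δ ^ (m₀ + i + 1)) (δ ^ (m₀ + i)), f r / r).symm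
    have hJi_nonneg : ∀ i : ℕ, 0 ≤ ∫ r in Ioc (δ ^ (m₀ + i + 1)) (δ ^ (m₀ + i)), f r / r :=
      fun i => hg_nonneg (hpow_pos (m₀ + i + 1)).le (hpow_le_one (m₀ + i))
    have hinner : ∀ i : ℕ, (∑ k ∈ Finset.Ico (i + 1) n,
        q ^ (k - i - 1) * ∫ r in Ioc (δ ^ (m₀ + i + 1)) (δ ^ (m₀ + i)), f r / r) ≤
        (1 / (1 - q)) * ∫ r in Ioc (δ ^ (m₀ + i + 1)) (δ ^ (m₀ + i)), f r / r := by
      intro i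
      rw [← Finset.sum_mul]
      apply mul_le_mul_of_nonneg_right _ (hJi_nonneg i)
      rw [Finset.sum_Ico_eq_sum_range]
      calc (∑ k ∈ Finset.range (n - (i + 1)), q ^ (i + 1 + k - i - 1))
          = ∑ k ∈ Finset.range (n - (i + 1)), q ^ k := by
            apply Finset.sum_congr rfl
            intro k _
            congr 1
            omega
        _ ≤ 1 / (1 - q) := hgeom _
    have step2 : (∑ k ∈ Finset.range n, ∑ i ∈ Finset.range k,
        q ^ (k - i - 1) * ∫ r in Ioc (δ ^ (m₀ + i + 1)) (δ ^ (m₀ + i)), f r / r) ≤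
        (1 / (1 - q)) * ∫ r in Ioc (0:ℝ) (δ ^ m₀), f r / r := by
      rw [hswap]
      calc (∑ i ∈ Finset.range n, ∑ k ∈ Finset.Ico (i + 1) n,
          q ^ (k - i - 1) * ∫ r in Ioc (δ ^ (m₀ + i + 1)) (δ ^ (m₀ + i)), f r / r)
          ≤ ∑ i ∈ Finset.range n,
              (1 / (1 - q)) * ∫ r in Ioc (δ ^ (m₀ + i + 1)) (δ ^ (m₀ + i)), f r / r :=
            Finset.sum_le_sum fun i _ => hinner i
        _ = (1 / (1 - q)) * ∑ i ∈ Finset.range n,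
              ∫ r in Ioc (δ ^ (m₀ + i + 1)) (δ ^ (m₀ + i)), f r / r := by
            rw [Finset.mul_sum]
        _ = (1 / (1 - q)) * ∫ r in Ioc (δ ^ (m₀ + n)) (δ ^ m₀), f r / r := by rw [hgsum n]
        _ ≤ (1 / (1 - q)) * ∫ r in Ioc (0:ℝ) (δ ^ m₀), f r / r := by
            apply mul_le_mul_of_nonneg_left _ (by positivity)
            apply MeasureTheory.setIntegral_mono_set (hg_int le_rfl (hpow_le_one m₀))
            · filter_upwards [MeasureTheory.ae_restrict_mem measurableSet_Ioc] with r hr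
              exact div_nonneg (hnonneg r (Ioc_subset_Ioc le_rfl (hpow_le_one m₀) hr))
                hr.1.le
            · exact Filter.Eventually.of_forall fun r hr =>
                ⟨(hpow_pos (m₀ + n)).trans hr.1, hr.2⟩
    have step3 : (∑ k ∈ Finset.range n,
        q ^ (m₀ + k) * ∫ r in Ioc (δ ^ m₀) (δ ^ (m₀ - 2)), f r / r ^ (1 + α)) ≤
        (1 / (1 - q)) * (q ^ m₀ * ∫ r in Ioc (δ ^ m₀) (δ ^ (m₀ - 2)), f r / r ^ (1 + α)) := by
      rw [← Finset.sum_mul]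
      have h4 : (∑ k ∈ Finset.range n, q ^ (m₀ + k)) ≤ q ^ m₀ * (1 / (1 - q)) := by
        calc (∑ k ∈ Finset.range n, q ^ (m₀ + k))
            = q ^ m₀ * ∑ k ∈ Finset.range n, q ^ k := by
              rw [Finset.mul_sum]
              exact Finset.sum_congr rfl fun k _ => pow_add q m₀ k
          _ ≤ q ^ m₀ * (1 / (1 - q)) :=
              mul_le_mul_of_nonneg_left (hgeom n) (pow_nonneg hq0.le m₀)
      calc (∑ k ∈ Finset.range n, q ^ (m₀ + k)) *
            ∫ r in Ioc (δ ^ m₀) (δ ^ (m₀ - 2)), f r / r ^ (1 + α)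
          ≤ (q ^ m₀ * (1 / (1 - q))) *
            ∫ r in Ioc (δ ^ m₀) (δ ^ (m₀ - 2)), f r / r ^ (1 + α) :=
            mul_le_mul_of_nonneg_right h4 hIm_nonneg
        _ = (1 / (1 - q)) * (q ^ m₀ *
            ∫ r in Ioc (δ ^ m₀) (δ ^ (m₀ - 2)), f r / r ^ (1 + α)) := by ring
    calc (∑ k ∈ Finset.range n, δ ^ ((m₀ + k : ℕ) * α) *
          ∫ r in Ioc (δ ^ (m₀ + k)) (δ ^ (m₀ - 2)), f r / r ^ (1 + α))
        ≤ ∑ k ∈ Finset.range n, ((∑ i ∈ Finset.range k,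
            q ^ (k - i - 1) * ∫ r in Ioc (δ ^ (m₀ + i + 1)) (δ ^ (m₀ + i)), f r / r) +
          q ^ (m₀ + k) * ∫ r in Ioc (δ ^ m₀) (δ ^ (m₀ - 2)), f r / r ^ (1 + α)) := step1
      _ = (∑ k ∈ Finset.range n, ∑ i ∈ Finset.range k,
            q ^ (k - i - 1) * ∫ r in Ioc (δ ^ (m₀ + i + 1)) (δ ^ (m₀ + i)), f r / r) +
          ∑ k ∈ Finset.range n,
            q ^ (m₀ + k) * ∫ r in Ioc (δ ^ m₀) (δ ^ (m₀ - 2)), f r / r ^ (1 + α) :=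
          Finset.sum_add_distrib
      _ ≤ (1 / (1 - q)) * (∫ r in Ioc (0:ℝ) (δ ^ m₀), f r / r) +
          (1 / (1 - q)) * (q ^ m₀ *
            ∫ r in Ioc (δ ^ m₀) (δ ^ (m₀ - 2)), f r / r ^ (1 + α)) :=
          add_le_add step2 step3
      _ = (1 / (1 - q)) * ((∫ r in Ioc (0:ℝ) (δ ^ m₀), f r / r) +
          q ^ m₀ * ∫ r in Ioc (δ ^ m₀) (δ ^ (m₀ - 2)), f r / r ^ (1 + α)) := by ring
  -- conclude
  rw [hrpow_eq m₀]
  have hbracket : 0 ≤ (∫ r in Ioc (0:ℝ) (δ ^ m₀), f r / r) +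
      q ^ m₀ * ∫ r in Ioc (δ ^ m₀) (δ ^ (m₀ - 2)), f r / r ^ (1 + α) := by
    have := pow_nonneg hq0.le m₀
    nlinarith
  apply tsum_le_of_sum_le'
  · exact mul_nonneg (by positivity) hbracket
  · intro s
    obtain ⟨n, hn⟩ := s.exists_nat_subset_range
    calc (∑ k ∈ s, δ ^ ((m₀ + k : ℕ) * α) *
          ∫ r in Ioc (δ ^ (m₀ + k)) (δ ^ (m₀ - 2)), f r / r ^ (1 + α))
        ≤ ∑ k ∈ Finset.range n, δ ^ ((m₀ + k : ℕ) * α) *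
          ∫ r in Ioc (δ ^ (m₀ + k)) (δ ^ (m₀ - 2)), f r / r ^ (1 + α) :=
          Finset.sum_le_sum_of_subset_of_nonneg hn fun i _ _ => hterm_nonneg i
      _ ≤ (1 / (1 - q)) * ((∫ r in Ioc (0:ℝ) (δ ^ m₀), f r / r) +
          q ^ m₀ * ∫ r in Ioc (δ ^ m₀) (δ ^ (m₀ - 2)), f r / r ^ (1 + α)) := hpartial n
      _ ≤ (1 / (α * (1 - δ) * q)) * ((∫ r in Ioc (0:ℝ) (δ ^ m₀), f r / r) +
          q ^ m₀ * ∫ r in Ioc (δ ^ m₀) (δ ^ (m₀ - 2)), f r / r ^ (1 + α)) :=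
          mul_le_mul_of_nonneg_right hfrac hbracket
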